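/- Let K ≥ 2 and Ξ = { z ∈ ℝ^K : Σ_{j=1}^K z_j = K−1, 0 ≤ z_1 ≤ ... ≤ z_K ≤ 1 }. If z ∈ Ξ is an extreme point of Ξ, then z = z_j^* for some j ∈ [K], where z_j^* has first j coordinates equal to 1 − 1/j and remaining coordinates equal to 1. -/

import Mathlib

set_option maxHeartbeats 1000000

open Finset

lemma key_lemma (K : ℕ) (hK : 2 ≤ K) (z : Fin K → ℝ)
    (hsum : (∑ i, z i) = K - 1) (hmono : Monotone z)
    (hbound : ∀ i, 0 ≤ z i ∧ z i ≤ 1)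
    (hext : ∀ x₁ ∈ {z : Fin K → ℝ | (∑ i, z i) = K - 1 ∧ Monotone z ∧
          (∀ i, 0 ≤ z i ∧ z i ≤ 1)}, ∀ x₂ ∈ {z : Fin K → ℝ | (∑ i, z i) = K - 1 ∧ Monotone z ∧
          (∀ i, 0 ≤ z i ∧ z i ≤ 1)}, z ∈ openSegment ℝ x₁ x₂ → x₁ = z ∧ x₂ = z)
    (p q : Fin K) (hq1 : z q < 1) (hpq : z p < z q) : False := by
  have hK0 : 0 < K := by omega
  set i0 : Fin K := ⟨0, hK0⟩ with hi0
  set a := z i0 with ha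
  have ha_le : ∀ i, a ≤ z i := fun i => hmono (Fin.mk_le_of_le_val (Nat.zero_le _))
  have haq : a < z q := lt_of_le_of_lt (ha_le p) hpq
  have hdef : ∑ i, (1 - z i) = 1 := by
    rw [Finset.sum_sub_distrib, hsum]
    simp [Finset.card_univ]
  have hi0q : i0 ≠ q := by intro h; rw [← h] at haq; exact lt_irrefl _ haq
  have ha_pos : 0 < a := by
    have hsub : ({i0, q} : Finset (Fin K)) ⊆ univ := subset_univ _
    have hle : ∑ i ∈ ({i0, q} : Finset (Fin K)), (1 - z i) ≤ ∑ i, (1 - z i) :=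
      Finset.sum_le_sum_of_subset_of_nonneg hsub (fun i _ _ => by linarith [(hbound i).2])
    rw [Finset.sum_pair hi0q, hdef] at hle
    linarith
  -- b : second smallest value
  have hTne : (univ.filter (fun i => a < z i)).Nonempty := ⟨q, by simp [haq]⟩
  obtain ⟨ib, hib_mem, hib⟩ := Finset.exists_mem_eq_inf' hTne z
  set b := (univ.filter (fun i => a < z i)).inf' hTne z with hb
  have hb_le : ∀ i, a < z i → b ≤ z i := fun i hi => Finset.inf'_le z (by simp [hi])
  have hab : a < b := by rw [hib]; exact (Finset.mem_filter.mp hib_mem).2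
  have hb1 : b < 1 := lt_of_le_of_lt (hb_le q haq) hq1
  have hval : ∀ i, z i = a ∨ z i = b ∨ b < z i := by
    intro i
    rcases eq_or_lt_of_le (ha_le i) with h | h
    · exact Or.inl h.symm
    · rcases eq_or_lt_of_le (hb_le i h) with h2 | h2
      · exact Or.inr (Or.inl h2.symm)
      · exact Or.inr (Or.inr h2)
  set A := univ.filter (fun i => z i = a) with hA
  set B := univ.filter (fun i => z i = b) with hB
  set M := A.card with hM
  set N := B.card with hN
  have hM1 : 1 ≤ M := Finset.card_pos.mpr ⟨i0, by simp [hA, ha]⟩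
  have hN1 : 1 ≤ N := Finset.card_pos.mpr ⟨ib, by simp [hB, hib.symm]⟩
  have hMK : (M : ℝ) ≤ K := by
    have := Finset.card_le_card (Finset.subset_univ A)
    rw [Finset.card_univ, Fintype.card_fin] at this
    exact_mod_cast this
  have hNK : (N : ℝ) ≤ K := by
    have := Finset.card_le_card (Finset.subset_univ B)
    rw [Finset.card_univ, Fintype.card_fin] at this
    exact_mod_cast this
  have hN0 : (1:ℝ) ≤ N := by exact_mod_cast hN1
  have hM0 : (1:ℝ) ≤ M := by exact_mod_cast hM1
  -- gap g
  have hune : (univ : Finset (Fin K)).Nonempty := ⟨i0, Finset.mem_univ i0⟩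
  set g := univ.inf' hune (fun i => if b < z i then z i - b else 1 - b) with hg
  have hg_pos : 0 < g := by
    rw [hg, Finset.lt_inf'_iff]
    intro i _
    split <;> linarith
  have hg_le1 : g ≤ 1 - b := by
    have := Finset.inf'_le (fun i => if b < z i then z i - b else 1 - b) (Finset.mem_univ i0)
    rw [if_neg (by rw [← ha]; exact not_lt.mpr hab.le)] at this
    exact le_trans this (le_refl _)
  have hg_le : ∀ i, b < z i → g ≤ z i - b := by
    intro i hi
    have := Finset.inf'_le (fun i => if b < z i then z i - b else 1 - b) (Finset.mem_univ i)
    rwa [if_pos hi] at this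
  set δ := min (min a (b - a)) g with hδ
  have hδ_pos : 0 < δ := lt_min (lt_min ha_pos (by linarith)) hg_pos
  set ε := δ / (2 * K) with hε
  have hε_pos : 0 < ε := div_pos hδ_pos (by positivity)
  have hKne : (K:ℝ) ≠ 0 := by positivity
  have hεK : ε * K = δ / 2 := by rw [hε]; field_simp
  have hεN : ε * N ≤ δ / 2 := by
    calc ε * N ≤ ε * K := mul_le_mul_of_nonneg_left hNK hε_pos.le
    _ = δ / 2 := hεK
  have hεM : ε * M ≤ δ / 2 := by
    calc ε * M ≤ ε * K := mul_le_mul_of_nonneg_left hMK hε_pos.le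
    _ = δ / 2 := hεK
  have hδa : δ ≤ a := le_trans (min_le_left _ _) (min_le_left _ _)
  have hδba : δ ≤ b - a := le_trans (min_le_left _ _) (min_le_right _ _)
  have hδg : δ ≤ g := min_le_right _ _
  have f1 : ε * N ≤ a := by linarith
  have f2 : a + ε * N ≤ b - ε * M := by linarith
  have f3 : ∀ i, b < z i → b + ε * M ≤ z i := fun i hi => by linarith [hg_le i hi]
  have f4 : b + ε * M ≤ 1 := by linarith
  have hεN0 : 0 < ε * N := by positivity
  have hεM0 : 0 < ε * M := by positivity
  -- the perturbation
  set e : Fin K → ℝ := fun i =>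
    (if z i = a then (N : ℝ) else 0) + (if z i = b then -(M : ℝ) else 0) with he
  have he_a : ∀ i, z i = a → e i = N := by
    intro i hi
    have h2 : z i ≠ b := by rw [hi]; exact ne_of_lt hab
    show (if z i = a then (N : ℝ) else 0) + (if z i = b then -(M : ℝ) else 0) = N
    rw [if_pos hi, if_neg h2]; ring
  have he_b : ∀ i, z i = b → e i = -(M:ℝ) := by
    intro i hi
    have h2 : z i ≠ a := by rw [hi]; exact ne_of_gt hab
    show (if z i = a then (N : ℝ) else 0) + (if z i = b then -(M : ℝ) else 0) = -(M:ℝ)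
    rw [if_pos hi, if_neg h2]; ring
  have he_c : ∀ i, b < z i → e i = 0 := by
    intro i hi
    have h1 : z i ≠ a := by intro h; rw [h] at hi; linarith
    have h2 : z i ≠ b := by intro h; rw [h] at hi; linarith
    show (if z i = a then (N : ℝ) else 0) + (if z i = b then -(M : ℝ) else 0) = 0
    rw [if_neg h1, if_neg h2]; ring
  have hesum : ∑ i, e i = 0 := by
    have h1 : ∑ i, (if z i = a then (N:ℝ) else 0) = (M:ℝ) * N := by
      rw [← Finset.sum_filter, Finset.sum_const, ← hA, ← hM, nsmul_eq_mul]
    have h2 : ∑ i, (if z i = b then -(M:ℝ) else 0) = (N:ℝ) * (-(M:ℝ)) := by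
      rw [← Finset.sum_filter, Finset.sum_const, ← hB, ← hN, nsmul_eq_mul]
    show ∑ i, ((if z i = a then (N:ℝ) else 0) + (if z i = b then -(M:ℝ) else 0)) = 0
    rw [Finset.sum_add_distrib, h1, h2]; ring
  set x1 : Fin K → ℝ := fun i => z i + ε * e i with hx1
  set x2 : Fin K → ℝ := fun i => z i - ε * e i with hx2
  have hsum1 : ∑ i, x1 i = K - 1 := by
    show ∑ i, (z i + ε * e i) = (K:ℝ) - 1
    rw [Finset.sum_add_distrib, ← Finset.mul_sum, hesum, hsum]
    ring
  have hsum2 : ∑ i, x2 i = K - 1 := by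
    show ∑ i, (z i - ε * e i) = (K:ℝ) - 1
    rw [Finset.sum_sub_distrib, ← Finset.mul_sum, hesum, hsum]
    ring
  have hbound1 : ∀ i, 0 ≤ x1 i ∧ x1 i ≤ 1 := by
    intro i
    rcases hval i with h | h | h
    · show 0 ≤ z i + ε * e i ∧ z i + ε * e i ≤ 1
      rw [he_a i h, h]
      constructor <;> linarith
    · show 0 ≤ z i + ε * e i ∧ z i + ε * e i ≤ 1
      rw [he_b i h, h]
      constructor <;> linarith
    · show 0 ≤ z i + ε * e i ∧ z i + ε * e i ≤ 1
      rw [he_c i h]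
      have := hbound i
      constructor <;> linarith [this.1, this.2]
  have hbound2 : ∀ i, 0 ≤ x2 i ∧ x2 i ≤ 1 := by
    intro i
    rcases hval i with h | h | h
    · show 0 ≤ z i - ε * e i ∧ z i - ε * e i ≤ 1
      rw [he_a i h, h]
      constructor <;> linarith
    · show 0 ≤ z i - ε * e i ∧ z i - ε * e i ≤ 1
      rw [he_b i h, h]
      constructor <;> linarith
    · show 0 ≤ z i - ε * e i ∧ z i - ε * e i ≤ 1
      rw [he_c i h]
      have := hbound i
      constructor <;> linarith [this.1, this.2]
  have hmono1 : Monotone x1 := by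
    intro i j hij
    have hz_le : z i ≤ z j := hmono hij
    show z i + ε * e i ≤ z j + ε * e j
    rcases hval i with hi | hi | hi <;> rcases hval j with hj | hj | hj
    · rw [he_a i hi, he_a j hj, hi, hj]
    · rw [he_a i hi, he_b j hj, hi, hj]; linarith
    · rw [he_a i hi, he_c j hj, hi]; linarith
    · rw [hi, hj] at hz_le; linarith
    · rw [he_b i hi, he_b j hj, hi, hj]
    · rw [he_b i hi, he_c j hj, hi]; linarith
    · rw [hj] at hz_le; linarith
    · rw [hj] at hz_le; linarith
    · rw [he_c i hi, he_c j hj]; linarith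
  have hmono2 : Monotone x2 := by
    intro i j hij
    have hz_le : z i ≤ z j := hmono hij
    show z i - ε * e i ≤ z j - ε * e j
    rcases hval i with hi | hi | hi <;> rcases hval j with hj | hj | hj
    · rw [he_a i hi, he_a j hj, hi, hj]
    · rw [he_a i hi, he_b j hj, hi, hj]; linarith
    · rw [he_a i hi, he_c j hj, hi]; linarith
    · rw [hi, hj] at hz_le; linarith
    · rw [he_b i hi, he_b j hj, hi, hj]
    · rw [he_b i hi, he_c j hj, hi]; linarith [f3 j hj]
    · rw [hj] at hz_le; linarith
    · rw [hj] at hz_le; linarith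
    · rw [he_c i hi, he_c j hj]; linarith
  have hseg : z ∈ openSegment ℝ x1 x2 := by
    refine ⟨1/2, 1/2, by norm_num, by norm_num, by norm_num, ?_⟩
    funext i
    show (1/2:ℝ) * (z i + ε * e i) + (1/2:ℝ) * (z i - ε * e i) = z i
    ring
  obtain ⟨h1, _⟩ := hext x1 ⟨hsum1, hmono1, hbound1⟩ x2 ⟨hsum2, hmono2, hbound2⟩ hseg
  have h2 : z i0 + ε * e i0 = z i0 := congrFun h1 i0
  rw [he_a i0 rfl] at h2
  linarith

theorem extreme_point_eq_zstar (K : ℕ) (hK : 2 ≤ K) (z : Fin K → ℝ)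
    (hz : z ∈ Set.extremePoints ℝ
        {z : Fin K → ℝ | (∑ i, z i) = K - 1 ∧ Monotone z ∧
          (∀ i, 0 ≤ z i ∧ z i ≤ 1)}) :
    ∃ j : Fin K,
      z = fun i : Fin K => if (i : ℕ) ≤ (j : ℕ) then 1 - 1 / ((j : ℕ) + 1 : ℝ) else 1 := by
  obtain ⟨⟨hsum, hmono, hbound⟩, hext⟩ := hz
  have key : ∀ p q : Fin K, z q < 1 → ¬ (z p < z q) := fun p q hq1 hpq =>
    key_lemma K hK z hsum hmono hbound
      (fun x₁ h₁ x₂ h₂ hs => ⟨hext h₁ h₂ hs, hext h₂ h₁ (by rwa [openSegment_symm] at hs)⟩) p q hq1 hpq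
  have hK0 : 0 < K := by omega
  set S := Finset.univ.filter (fun i => z i < 1) with hS
  set t := S.card with ht
  have hex : ∃ i, z i < 1 := by
    by_contra h
    push_neg at h
    have hall : ∀ i : Fin K, z i = (1:ℝ) := fun i => le_antisymm (hbound i).2 (h i)
    rw [Finset.sum_congr rfl (fun i _ => hall i)] at hsum
    rw [Finset.sum_const, Finset.card_univ, Fintype.card_fin, nsmul_eq_mul] at hsum
    have : (K:ℝ) = K - 1 := by linarith [hsum]
    linarith
  obtain ⟨iw, hiw⟩ := hex
  have ht1 : 1 ≤ t := Finset.card_pos.mpr ⟨iw, by simp [hS, hiw]⟩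
  have htK : t ≤ K := by
    have := Finset.card_le_card (Finset.subset_univ S)
    rwa [Finset.card_univ, Fintype.card_fin] at this
  have hchar1 : ∀ i : Fin K, (i:ℕ) < t → z i < 1 := by
    intro i hi
    by_contra h
    push_neg at h
    have hsub : S ⊆ Finset.Iio i := by
      intro k hk
      rw [Finset.mem_Iio]
      rw [hS, Finset.mem_filter] at hk
      by_contra hk2
      push_neg at hk2
      have : z i ≤ z k := hmono hk2
      linarith [hk.2]
    have hcard := Finset.card_le_card hsub
    rw [Fin.card_Iio] at hcard
    omega
  have hchar2 : ∀ i : Fin K, t ≤ (i:ℕ) → z i = 1 := by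
    intro i hi
    by_contra h
    have hlt : z i < 1 := lt_of_le_of_ne (hbound i).2 h
    have hsub : Finset.Iic i ⊆ S := by
      intro k hk
      rw [Finset.mem_Iic] at hk
      rw [hS, Finset.mem_filter]
      exact ⟨Finset.mem_univ k, lt_of_le_of_lt (hmono hk) hlt⟩
    have hcard := Finset.card_le_card hsub
    rw [Fin.card_Iic] at hcard
    omega
  set i0 : Fin K := ⟨0, hK0⟩ with hi0
  set v := z i0 with hv
  have hv1 : v < 1 := hchar1 i0 (show 0 < t by omega)
  have hveq : ∀ i : Fin K, (i:ℕ) < t → z i = v := by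
    intro i hi
    have h1 : v ≤ z i := hmono (Fin.mk_le_of_le_val (Nat.zero_le _))
    rcases eq_or_lt_of_le h1 with h | h
    · exact h.symm
    · exact absurd h (key i0 i (hchar1 i hi))
  have hfe : Finset.univ.filter (fun i : Fin K => (i:ℕ) < t) = S := by
    ext k
    rw [hS, Finset.mem_filter, Finset.mem_filter]
    constructor
    · exact fun hk => ⟨hk.1, hchar1 k hk.2⟩
    · intro hk
      refine ⟨hk.1, ?_⟩
      by_contra h2
      push_neg at h2
      rw [hchar2 k h2] at hk
      exact lt_irrefl _ hk.2
  have hzsum : (t:ℝ) * v + ((K:ℝ) - t) = (K:ℝ) - 1 := by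
    rw [← Finset.sum_filter_add_sum_filter_not Finset.univ (fun i : Fin K => (i:ℕ) < t) z]
      at hsum
    have e1 : ∑ i ∈ Finset.univ.filter (fun i : Fin K => (i:ℕ) < t), z i = (t:ℝ) * v := by
      rw [Finset.sum_congr rfl (fun i hi => hveq i (Finset.mem_filter.mp hi).2),
        Finset.sum_const, hfe, ← ht, nsmul_eq_mul]
    have hc2 : (Finset.univ.filter (fun i : Fin K => ¬ (i:ℕ) < t)).card = K - t := by
      rw [Finset.filter_not, Finset.card_sdiff_of_subset (Finset.filter_subset _ _), hfe,
        Finset.card_univ, Fintype.card_fin, ← ht]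
    have e2 : ∑ i ∈ Finset.univ.filter (fun i : Fin K => ¬ (i:ℕ) < t), z i
        = (K:ℝ) - t := by
      have hmem : ∀ i ∈ Finset.univ.filter (fun i : Fin K => ¬ (i:ℕ) < t), z i = 1 := by
        intro i hi
        have := (Finset.mem_filter.mp hi).2
        exact hchar2 i (by omega)
      rw [Finset.sum_congr rfl hmem, Finset.sum_const, hc2, nsmul_eq_mul, mul_one,
        Nat.cast_sub htK]
    rw [e1, e2] at hsum
    linarith
  have htne : (t:ℝ) ≠ 0 := by
    have : (0:ℝ) < t := by exact_mod_cast ht1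
    linarith
  have hvval : v = 1 - 1 / (t:ℝ) := by
    field_simp
    field_simp at hzsum
    linarith
  refine ⟨⟨t - 1, by omega⟩, ?_⟩
  funext i
  show z i = if (i:ℕ) ≤ t - 1 then 1 - 1/(((t-1:ℕ):ℝ) + 1) else 1
  have hcast : ((t - 1 : ℕ):ℝ) + 1 = (t:ℝ) := by
    push_cast [Nat.cast_sub ht1]
    ring
  by_cases h : (i:ℕ) < t
  · rw [if_pos (by omega), hveq i h, hvval, hcast]
  · rw [if_neg (by omega), hchar2 i (by omega)]
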